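/- arXiv:math/0610939 — 3 statements merged into one kernel-verified Lean document; each statement's English description precedes it below -/
import Mathlib

section
/- Upper bound on the conditional occurrence probability: for any local configuration η on a ball B = B(x,r) and boundary configuration σ on δB, μ_{a,b}(I_x^η = 1 | σ) ≤ Wₙ(η)·(1 + 1_{σ≠σ⁰}·Δₙ(η)/Wₙ(σ)). -/
open Filter

attribute [local instance] Classical.propDecidable

noncomputable section

/-- Number of positive vertices of configuration `c` on `S`. -/
def confK {V : Type*} (S : Finset V) (c : V → Bool) : ℕ :=
  (S.filter fun x => c x = true).card

/-- Ordered pairs of adjacent positive vertices in `S` (twice the number of positive edges). -/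
def confPosPairs {V : Type*} (G : SimpleGraph V) (S : Finset V) (c : V → Bool) : ℕ :=
  ((S ×ˢ S).filter fun q => G.Adj q.1 q.2 ∧ c q.1 = true ∧ c q.2 = true).card

/-- Perimeter `γ(c) = 𝒱·k(c) − 2·|{positive edges inside S}|`. -/
def confGamma {V : Type*} (G : SimpleGraph V) (Vdeg : ℕ) (S : Finset V) (c : V → Bool) : ℤ :=
  (Vdeg : ℤ) * confK S c - confPosPairs G S c

/-- Weight `W(c) = exp(2a·k(c) − 2b·γ(c))`. -/
def confW {V : Type*} (G : SimpleGraph V) (Vdeg : ℕ) (a b : ℝ) (S : Finset V) (c : V → Bool) : ℝ :=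
  Real.exp (2 * a * confK S c - 2 * b * confGamma G Vdeg S c)

/-- Number of edges joining a positive vertex of `c` on `S` to a positive vertex of `c'` on `S'`. -/
def confConn {V : Type*} (G : SimpleGraph V) (S S' : Finset V) (c c' : V → Bool) : ℕ :=
  ((S ×ˢ S').filter fun q => G.Adj q.1 q.2 ∧ c q.1 = true ∧ c' q.2 = true).card

/-- Combined configuration: `c` on `S`, `c'` elsewhere. -/
def confUnion {V : Type*} (S : Finset V) (c c' : V → Bool) : V → Bool :=
  fun x => if x ∈ S then c x else c' x

/-- Outer vertex boundary of `S`. -/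
def outerBoundary {V : Type*} [Fintype V] (G : SimpleGraph V) (S : Finset V) : Finset V :=
  Finset.univ.filter fun z => z ∉ S ∧ ∃ y ∈ S, G.Adj y z

/-- Unnormalized Gibbs weight of the Ising model with magnetic field `a`, pair potential `b`. -/
def gibbsWeight {V : Type*} [Fintype V] (G : SimpleGraph V) (a b : ℝ) (σ : V → Bool) : ℝ :=
  Real.exp (a * ∑ x : V, (if σ x then (1 : ℝ) else -1) +
    b / 2 * ∑ q ∈ Finset.univ.filter (fun q : V × V => G.Adj q.1 q.2),
      (if σ q.1 then (1 : ℝ) else -1) * (if σ q.2 then (1 : ℝ) else -1))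

/-- Probability of a set `A` of configurations under the Ising Gibbs measure. -/
def gibbsProb {V : Type*} [Fintype V] (G : SimpleGraph V) (a b : ℝ)
    (A : Finset (V → Bool)) : ℝ :=
  (∑ σ ∈ A, gibbsWeight G a b σ) / ∑ σ : V → Bool, gibbsWeight G a b σ

/-- Expectation of `f` under the Ising Gibbs measure. -/
def gibbsExp {V : Type*} [Fintype V] (G : SimpleGraph V) (a b : ℝ)
    (f : (V → Bool) → ℝ) : ℝ :=
  (∑ σ : V → Bool, f σ * gibbsWeight G a b σ) / ∑ σ : V → Bool, gibbsWeight G a b σ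

/-- The event that the configuration restricted to `S` equals `η`. -/
def occursOn {V : Type*} [Fintype V] (S : Finset V) (η : V → Bool) : Finset (V → Bool) :=
  Finset.univ.filter fun σ => ∀ y ∈ S, σ y = η y

/-- The probability gap `Δ(η) = max_{σ ≠ σ⁰ on δB} W(η σ)/W(η)`. -/
def probGap {V : Type*} [Fintype V] (G : SimpleGraph V) (Vdeg : ℕ) (a b : ℝ)
    (B : Finset V) (η : V → Bool) : ℝ :=
  ⨆ σ : {σ : V → Bool // ∃ z ∈ outerBoundary G B, σ z = true},
    confW G Vdeg a b (B ∪ outerBoundary G B) (confUnion B η σ.1) / confW G Vdeg a b B η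

/-- The maximality probability `Θ(η) = max_{η' ≠ η, V₊(η') ⊇ V₊(η)} W(η')/W(η)`. -/
def maxProb {V : Type*} (G : SimpleGraph V) (Vdeg : ℕ) (a b : ℝ)
    (B : Finset V) (η : V → Bool) : ℝ :=
  ⨆ η' : {η' : V → Bool // (∀ y ∈ B, η y = true → η' y = true) ∧ ∃ y ∈ B, η' y ≠ η y},
    confW G Vdeg a b B η'.1 / confW G Vdeg a b B η

/-- Poisson probability mass function. -/
def poissonPMF (lam : ℝ) (m : ℕ) : ℝ := Real.exp (-lam) * lam ^ m / (m.factorial : ℝ)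

/-- Total variation distance between two (sub)probability mass functions on `ℕ`. -/
def dTVnat (f g : ℕ → ℝ) : ℝ := (1 / 2) * ∑' m : ℕ, |f m - g m|

/-- Torus distance of a residue: `min(c, n − c)`. -/
def torusTd (n : ℕ) (c : ZMod n) : ℕ := min c.val (-c).val

/-- The `d`-dimensional lattice torus of size `n`: `x ∼ y` iff `x ≠ y` and `‖x − y‖_p ≤ ρ`. -/
def torusGraph (d n ρ : ℕ) (p : ENNReal) : SimpleGraph (Fin d → ZMod n) where
  Adj x y := x ≠ y ∧
    (if p = ⊤ then ∀ i, torusTd n (x i - y i) ≤ ρ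
     else ∑ i, (torusTd n (x i - y i) : ℝ) ^ p.toReal ≤ (ρ : ℝ) ^ p.toReal)
  symm := by
    constructor
    rintro x y ⟨hne, h⟩
    have key : ∀ i, torusTd n (y i - x i) = torusTd n (x i - y i) := by
      intro i
      have h1 : y i - x i = -(x i - y i) := by ring
      rw [h1]
      simp only [torusTd, neg_neg]
      exact min_comm _ _
    exact ⟨hne.symm, by simp only [key]; exact h⟩
  loopless := by constructor; rintro x ⟨hne, -⟩; exact hne rfl

/-- The ball `B(x,r)` for the graph distance on the torus. -/
def torusBall (d n ρ : ℕ) [NeZero n] (p : ENNReal) (x : Fin d → ZMod n) (r : ℕ) :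
    Finset (Fin d → ZMod n) :=
  Finset.univ.filter fun y => (torusGraph d n ρ p).dist x y ≤ r

/-- Translation of a local configuration `η` (given around `0`) to the ball around `x`. -/
def torusTrans {d n : ℕ} (x : Fin d → ZMod n) (η : (Fin d → ZMod n) → Bool) :
    (Fin d → ZMod n) → Bool := fun y => η (y - x)

/-- The `d`-dimensional lattice `ℤ^d` with `x ∼ y` iff `x ≠ y` and `‖x − y‖_p ≤ ρ`. -/
def latticeGraph (d ρ : ℕ) (p : ENNReal) : SimpleGraph (Fin d → ℤ) where
  Adj v w := v ≠ w ∧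
    (if p = ⊤ then ∀ i, (v i - w i).natAbs ≤ ρ
     else ∑ i, ((v i - w i).natAbs : ℝ) ^ p.toReal ≤ (ρ : ℝ) ^ p.toReal)
  symm := by
    constructor
    rintro v w ⟨hne, h⟩
    have key : ∀ i, (w i - v i).natAbs = (v i - w i).natAbs := fun i => by omega
    exact ⟨hne.symm, by simp only [key]; exact h⟩
  loopless := by constructor; rintro v ⟨hne, -⟩; exact hne rfl

/-- The ball `B(0,r)` of the lattice `ℤ^d`, as a finite set. -/
def latticeBall (d ρ : ℕ) (p : ENNReal) (r : ℕ) : Finset (Fin d → ℤ) :=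
  (Fintype.piFinset fun _ : Fin d => Finset.Icc (-(ρ * r : ℤ)) (ρ * r)).filter
    fun v => (latticeGraph d ρ p).dist 0 v ≤ r

/-- Centered integer representative of a residue mod `n`. -/
def torusRep (n : ℕ) (c : ZMod n) : ℤ :=
  if 2 * c.val ≤ n then (c.val : ℤ) else (c.val : ℤ) - n

/-- A local configuration on the lattice ball, viewed on the torus. -/
def latticeToTorus (d n : ℕ) (η : (Fin d → ℤ) → Bool) : (Fin d → ZMod n) → Bool :=
  fun y => η fun i => torusRep n (y i)

set_option linter.unusedSectionVars false
namespace CPUB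
open Finset
variable {V : Type*} [Fintype V]

lemma sum_indic_univ {α : Type*} [Fintype α] (S : Finset α) (f : α → ℝ) :
    ∑ x ∈ S, f x = ∑ x : α, if x ∈ S then f x else 0 := by
  rw [Finset.sum_ite_mem, Finset.univ_inter]

lemma double_restrict {α : Type*} [Fintype α] (S T : Finset α) (f : α → α → ℝ) :
    ∑ y : α, ∑ z : α, (if y ∈ S then (if z ∈ T then f y z else 0) else 0)
      = ∑ y ∈ S, ∑ z ∈ T, f y z := by
  have h1 : ∀ y, ∑ z : α, (if y ∈ S then (if z ∈ T then f y z else 0) else 0)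
      = if y ∈ S then (∑ z ∈ T, f y z) else 0 := by
    intro y
    by_cases hy : y ∈ S <;> simp [hy, ← sum_indic_univ]
  rw [Finset.sum_congr rfl fun y _ => h1 y, ← sum_indic_univ]

lemma hP1test (G : SimpleGraph V) (S : Finset V) (c : V → Bool) :
    ∑ y ∈ S, ∑ z ∈ S, (if G.Adj y z ∧ c y = true ∧ c z = true then (1:ℝ) else 0)
      = (confPosPairs G S c : ℝ) := by
  rw [confPosPairs, ← Finset.sum_product']
  push_cast [Finset.card_filter]
  simp

lemma hP2test (G : SimpleGraph V) (S T : Finset V) (c σ : V → Bool) :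
    ∑ y ∈ S, ∑ z ∈ T, (if G.Adj y z ∧ c y = true ∧ σ z = true then (1:ℝ) else 0)
      = (confConn G S T c σ : ℝ) := by
  rw [confConn, ← Finset.sum_product']
  push_cast [Finset.card_filter]
  simp

lemma hKtest (S : Finset V) (c : V → Bool) :
    ∑ y ∈ S, (if c y = true then (1:ℝ) else 0) = (confK S c : ℝ) := by
  rw [confK]
  push_cast [Finset.card_filter]
  simp

lemma degree_sum_real (G : SimpleGraph V) (Vdeg : ℕ)
    (hdeg : ∀ x : V, G.degree x = Vdeg) (y : V) :
    ∑ z : V, (if G.Adj y z then (1:ℝ) else 0) = (Vdeg : ℝ) := by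
  rw [Finset.sum_boole]
  norm_cast
  rw [← hdeg y]
  congr 1
  ext z
  simp

lemma hQ1test (G : SimpleGraph V) (Vdeg : ℕ) (hdeg : ∀ x : V, G.degree x = Vdeg)
    (S : Finset V) (c : V → Bool) :
    ∑ y ∈ S, ∑ z : V, (if c y = true then (if G.Adj y z then (1:ℝ) else 0) else 0)
      = (Vdeg : ℝ) * (confK S c : ℝ) := by
  have h1 : ∀ y, ∑ z : V, (if c y = true then (if G.Adj y z then (1:ℝ) else 0) else 0)
      = (if c y = true then (1:ℝ) else 0) * (Vdeg : ℝ) := by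
    intro y
    by_cases hc : c y = true <;> simp [hc, degree_sum_real G Vdeg hdeg y]
  rw [Finset.sum_congr rfl fun y _ => h1 y, ← Finset.sum_mul, hKtest, mul_comm]

lemma mem_occursOn {V : Type*} [Fintype V] {S : Finset V} {η τ : V → Bool} :
    τ ∈ occursOn S η ↔ ∀ y ∈ S, τ y = η y := by
  rw [occursOn, Finset.mem_filter]
  exact ⟨fun h => h.2, fun h => ⟨Finset.mem_univ _, h⟩⟩
lemma sum_ite_pull {α : Type*} [Fintype α] (P : Prop) (f : α → ℝ) :
    ∑ z : α, (if P then f z else 0) = if P then ∑ z : α, f z else 0 := by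
  by_cases h : P <;> simp [h]

lemma sumQ (G : SimpleGraph V) (Vdeg : ℕ) (hdeg : ∀ x : V, G.degree x = Vdeg)
    (S : Finset V) (c : V → Bool) :
    ∑ y : V, ∑ z : V, (if y ∈ S then (if c y = true then (if G.Adj y z then (1:ℝ) else 0) else 0) else 0)
      = (Vdeg : ℝ) * (confK S c : ℝ) := by
  have h1 : ∀ y, ∑ z : V, (if y ∈ S then (if c y = true then (if G.Adj y z then (1:ℝ) else 0) else 0) else 0)
      = if y ∈ S then (if c y = true then (1:ℝ) else 0) * (Vdeg : ℝ) else 0 := by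
    intro y
    by_cases hy : y ∈ S <;> by_cases hc : c y = true <;>
      simp [hy, hc, degree_sum_real G Vdeg hdeg y]
  rw [Finset.sum_congr rfl fun y _ => h1 y, ← sum_indic_univ, ← Finset.sum_mul, hKtest, mul_comm]

lemma mem_outerBoundary_not_mem {G : SimpleGraph V} {S : Finset V} {z : V}
    (hz : z ∈ outerBoundary G S) : z ∉ S := (Finset.mem_filter.mp hz).2.1

lemma mem_outerBoundary_of_adj {G : SimpleGraph V} {S : Finset V} {y z : V}
    (hy : y ∈ S) (hadj : G.Adj y z) (hz : z ∉ S) : z ∈ outerBoundary G S :=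
  Finset.mem_filter.mpr ⟨Finset.mem_univ _, hz, y, hy, hadj⟩

lemma vertex_sum_key (S : Finset V) (c τ : V → Bool) (hτS : ∀ y ∈ S, τ y = false) :
    ∑ x : V, (if confUnion S c τ x then (1:ℝ) else -1)
      = (∑ x : V, if τ x then (1:ℝ) else -1) + 2 * (confK S c : ℝ) := by
  have hpt : ∀ x : V, (if confUnion S c τ x then (1:ℝ) else -1)
      = (if τ x then (1:ℝ) else -1) + 2 * (if x ∈ S then (if c x = true then (1:ℝ) else 0) else 0) := by
    intro x
    by_cases hx : x ∈ S
    · rw [hτS x hx]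
      simp only [confUnion, hx, if_true]
      cases hc : c x <;> simp [hc] <;> norm_num
    · simp [confUnion, hx]
  rw [Finset.sum_congr rfl fun x _ => hpt x, Finset.sum_add_distrib, ← Finset.mul_sum,
    ← sum_indic_univ, hKtest]

lemma pair_sum_key (G : SimpleGraph V) (Vdeg : ℕ)
    (hdeg : ∀ x : V, G.degree x = Vdeg) (S : Finset V) (c σ τ : V → Bool)
    (hτS : ∀ y ∈ S, τ y = false) (hτT : ∀ z ∈ outerBoundary G S, τ z = σ z) :
    ∑ q ∈ Finset.univ.filter (fun q : V × V => G.Adj q.1 q.2),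
        (if confUnion S c τ q.1 then (1:ℝ) else -1) * (if confUnion S c τ q.2 then (1:ℝ) else -1)
      = (∑ q ∈ Finset.univ.filter (fun q : V × V => G.Adj q.1 q.2),
        (if τ q.1 then (1:ℝ) else -1) * (if τ q.2 then (1:ℝ) else -1))
        + 4 * ((confPosPairs G S c : ℝ)) + 8 * ((confConn G S (outerBoundary G S) c σ : ℝ))
        - 4 * (Vdeg : ℝ) * ((confK S c : ℝ)) := by
  set T := outerBoundary G S with hTdef
  have hpoint : ∀ y z : V,
      (if G.Adj y z then ((if confUnion S c τ y then (1:ℝ) else -1) * (if confUnion S c τ z then (1:ℝ) else -1)) else 0)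
    = (if G.Adj y z then ((if τ y then (1:ℝ) else -1) * (if τ z then (1:ℝ) else -1)) else 0)
      + 4 * (if y ∈ S then (if z ∈ S then (if G.Adj y z ∧ c y = true ∧ c z = true then (1:ℝ) else 0) else 0) else 0)
      + 4 * (if y ∈ S then (if z ∈ T then (if G.Adj y z ∧ c y = true ∧ σ z = true then (1:ℝ) else 0) else 0) else 0)
      + 4 * (if y ∈ T then (if z ∈ S then (if G.Adj y z ∧ σ y = true ∧ c z = true then (1:ℝ) else 0) else 0) else 0)
      - 2 * (if y ∈ S then (if c y = true then (if G.Adj y z then (1:ℝ) else 0) else 0) else 0)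
      - 2 * (if z ∈ S then (if c z = true then (if G.Adj y z then (1:ℝ) else 0) else 0) else 0) := by
    intro y z
    by_cases hadj : G.Adj y z
    · by_cases hyS : y ∈ S <;> by_cases hzS : z ∈ S
      · have hyT : y ∉ T := fun h => mem_outerBoundary_not_mem h hyS
        have hzT : z ∉ T := fun h => mem_outerBoundary_not_mem h hzS
        simp only [confUnion, hyS, hzS, hyT, hzT, hτS y hyS, hτS z hzS, hadj,
          if_true, if_false, and_true, true_and]
        cases hc : c y <;> cases hc' : c z <;> norm_num
      · have hzT : z ∈ T := mem_outerBoundary_of_adj hyS hadj hzS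
        have hyT : y ∉ T := fun h => mem_outerBoundary_not_mem h hyS
        simp only [confUnion, hyS, hzS, hyT, hzT, hτS y hyS, hτT z hzT, hadj,
          if_true, if_false, and_true, true_and]
        cases hc : c y <;> cases hc' : σ z <;> norm_num
      · have hyT : y ∈ T := mem_outerBoundary_of_adj hzS hadj.symm hyS
        have hzT : z ∉ T := fun h => mem_outerBoundary_not_mem h hzS
        simp only [confUnion, hyS, hzS, hyT, hzT, hτS z hzS, hτT y hyT, hadj,
          if_true, if_false, and_true, true_and]
        cases hc : σ y <;> cases hc' : c z <;> norm_num
      · simp only [confUnion, hyS, hzS, hadj, if_true, if_false]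
        norm_num
    · simp [hadj]
  have hT1 : ∑ y : V, ∑ z : V,
      (if y ∈ S then (if z ∈ S then (if G.Adj y z ∧ c y = true ∧ c z = true then (1:ℝ) else 0) else 0) else 0)
      = (confPosPairs G S c : ℝ) := by
    rw [double_restrict S S fun y z => if G.Adj y z ∧ c y = true ∧ c z = true then (1:ℝ) else 0,
      hP1test]
  have hT2 : ∑ y : V, ∑ z : V,
      (if y ∈ S then (if z ∈ T then (if G.Adj y z ∧ c y = true ∧ σ z = true then (1:ℝ) else 0) else 0) else 0)
      = (confConn G S T c σ : ℝ) := by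
    rw [double_restrict S T fun y z => if G.Adj y z ∧ c y = true ∧ σ z = true then (1:ℝ) else 0,
      hP2test]
  have hT3 : ∑ y : V, ∑ z : V,
      (if y ∈ T then (if z ∈ S then (if G.Adj y z ∧ σ y = true ∧ c z = true then (1:ℝ) else 0) else 0) else 0)
      = (confConn G S T c σ : ℝ) := by
    rw [double_restrict T S fun y z => if G.Adj y z ∧ σ y = true ∧ c z = true then (1:ℝ) else 0,
      Finset.sum_comm, ← hP2test G S T c σ]
    apply Finset.sum_congr rfl; intro y _
    apply Finset.sum_congr rfl; intro z _
    exact if_congr (by rw [G.adj_comm]; tauto) rfl rfl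
  have hU1 : ∑ y : V, ∑ z : V,
      (if y ∈ S then (if c y = true then (if G.Adj y z then (1:ℝ) else 0) else 0) else 0)
      = (Vdeg : ℝ) * (confK S c : ℝ) := sumQ G Vdeg hdeg S c
  have hU2 : ∑ y : V, ∑ z : V,
      (if z ∈ S then (if c z = true then (if G.Adj y z then (1:ℝ) else 0) else 0) else 0)
      = (Vdeg : ℝ) * (confK S c : ℝ) := by
    rw [Finset.sum_comm, ← sumQ G Vdeg hdeg S c]
    apply Finset.sum_congr rfl; intro y _
    apply Finset.sum_congr rfl; intro z _
    exact if_congr Iff.rfl (if_congr Iff.rfl (if_congr (G.adj_comm z y) rfl rfl) rfl) rfl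
  rw [Finset.sum_filter, Finset.sum_filter, Fintype.sum_prod_type, Fintype.sum_prod_type]
  calc ∑ y : V, ∑ z : V, (if G.Adj y z then ((if confUnion S c τ y then (1:ℝ) else -1) * (if confUnion S c τ z then (1:ℝ) else -1)) else 0)
      = ∑ y : V, ∑ z : V,
        ((if G.Adj y z then ((if τ y then (1:ℝ) else -1) * (if τ z then (1:ℝ) else -1)) else 0)
        + 4 * (if y ∈ S then (if z ∈ S then (if G.Adj y z ∧ c y = true ∧ c z = true then (1:ℝ) else 0) else 0) else 0)
        + 4 * (if y ∈ S then (if z ∈ T then (if G.Adj y z ∧ c y = true ∧ σ z = true then (1:ℝ) else 0) else 0) else 0)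
        + 4 * (if y ∈ T then (if z ∈ S then (if G.Adj y z ∧ σ y = true ∧ c z = true then (1:ℝ) else 0) else 0) else 0)
        - 2 * (if y ∈ S then (if c y = true then (if G.Adj y z then (1:ℝ) else 0) else 0) else 0)
        - 2 * (if z ∈ S then (if c z = true then (if G.Adj y z then (1:ℝ) else 0) else 0) else 0)) :=
        Finset.sum_congr rfl fun y _ => Finset.sum_congr rfl fun z _ => hpoint y z
    _ = (∑ y : V, ∑ z : V, (if G.Adj y z then ((if τ y then (1:ℝ) else -1) * (if τ z then (1:ℝ) else -1)) else 0))
        + 4 * ((confPosPairs G S c : ℝ)) + 8 * ((confConn G S T c σ : ℝ))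
        - 4 * (Vdeg : ℝ) * ((confK S c : ℝ)) := by
        simp only [Finset.sum_add_distrib, Finset.sum_sub_distrib, ← Finset.mul_sum]
        rw [hT1, hT2, hT3, hU1, hU2]
        ring

lemma confK_union_real (S T : Finset V) (hST : ∀ z ∈ T, z ∉ S) (c σ : V → Bool) :
    ((confK (S ∪ T) (confUnion S c σ) : ℝ)) = (confK S c : ℝ) + (confK T σ : ℝ) := by
  have hdisj : Disjoint S T := Finset.disjoint_right.mpr hST
  rw [← hKtest, ← hKtest, ← hKtest, Finset.sum_union hdisj]
  congr 1
  · exact Finset.sum_congr rfl fun y hy => by simp [confUnion, hy]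
  · exact Finset.sum_congr rfl fun z hz => by simp [confUnion, hST z hz]

lemma posPairs_union_real (G : SimpleGraph V) (S T : Finset V) (hST : ∀ z ∈ T, z ∉ S)
    (c σ : V → Bool) :
    ((confPosPairs G (S ∪ T) (confUnion S c σ) : ℝ))
      = (confPosPairs G S c : ℝ) + (confPosPairs G T σ : ℝ) + 2 * (confConn G S T c σ : ℝ) := by
  have hdisj : Disjoint S T := Finset.disjoint_right.mpr hST
  rw [← hP1test, Finset.sum_union hdisj]
  have hSS : ∑ y ∈ S, ∑ z ∈ S ∪ T,
      (if G.Adj y z ∧ confUnion S c σ y = true ∧ confUnion S c σ z = true then (1:ℝ) else 0)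
      = (confPosPairs G S c : ℝ) + (confConn G S T c σ : ℝ) := by
    rw [← hP1test, ← hP2test]
    rw [← Finset.sum_add_distrib]
    apply Finset.sum_congr rfl; intro y hy
    rw [Finset.sum_union hdisj]
    congr 1
    · exact Finset.sum_congr rfl fun z hz => by
        exact if_congr (by simp [confUnion, hy, hz]) rfl rfl
    · exact Finset.sum_congr rfl fun z hz => by
        exact if_congr (by simp [confUnion, hy, hST z hz]) rfl rfl
  have hTT : ∑ y ∈ T, ∑ z ∈ S ∪ T,
      (if G.Adj y z ∧ confUnion S c σ y = true ∧ confUnion S c σ z = true then (1:ℝ) else 0)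
      = (confConn G S T c σ : ℝ) + (confPosPairs G T σ : ℝ) := by
    have hTS : ∑ y ∈ T, ∑ z ∈ S,
        (if G.Adj y z ∧ confUnion S c σ y = true ∧ confUnion S c σ z = true then (1:ℝ) else 0)
        = (confConn G S T c σ : ℝ) := by
      rw [← hP2test G S T c σ, Finset.sum_comm]
      apply Finset.sum_congr rfl; intro y hy
      apply Finset.sum_congr rfl; intro z hz
      exact if_congr (by rw [G.adj_comm]; simp [confUnion, hy, hST z hz]; tauto) rfl rfl
    rw [← hTS, ← hP1test G T σ, ← Finset.sum_add_distrib]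
    apply Finset.sum_congr rfl; intro y hy
    rw [Finset.sum_union hdisj]
    congr 1
    exact Finset.sum_congr rfl fun z hz => by
      exact if_congr (by simp [confUnion, hST y hy, hST z hz]) rfl rfl
  rw [hSS, hTT]
  ring

lemma key_weight (G : SimpleGraph V) (Vdeg : ℕ) (hdeg : ∀ x : V, G.degree x = Vdeg)
    (a b : ℝ) (S : Finset V) (c σ τ : V → Bool)
    (hτS : ∀ y ∈ S, τ y = false) (hτT : ∀ z ∈ outerBoundary G S, τ z = σ z) :
    gibbsWeight G a b (confUnion S c τ) * confW G Vdeg a b (outerBoundary G S) σ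
      = gibbsWeight G a b τ * confW G Vdeg a b (S ∪ outerBoundary G S) (confUnion S c σ) := by
  have hST : ∀ z ∈ outerBoundary G S, z ∉ S := fun z hz => mem_outerBoundary_not_mem hz
  simp only [gibbsWeight, confW, confGamma]
  rw [← Real.exp_add, ← Real.exp_add]
  congr 1
  rw [vertex_sum_key S c τ hτS, pair_sum_key G Vdeg hdeg S c σ τ hτS hτT]
  push_cast
  rw [confK_union_real S (outerBoundary G S) hST c σ,
    posPairs_union_real G S (outerBoundary G S) hST c σ]
  ring

lemma confW_pos (G : SimpleGraph V) (Vdeg : ℕ) (a b : ℝ) (S : Finset V) (c : V → Bool) :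
    0 < confW G Vdeg a b S c := Real.exp_pos _

lemma gibbsWeight_pos (G : SimpleGraph V) (a b : ℝ) (σ : V → Bool) :
    0 < gibbsWeight G a b σ := Real.exp_pos _

lemma confW_sigma0 (G : SimpleGraph V) (Vdeg : ℕ) (a b : ℝ) (T : Finset V) (σ : V → Bool)
    (h0 : ∀ z ∈ T, σ z = false) : confW G Vdeg a b T σ = 1 := by
  have hK : confK T σ = 0 := by
    rw [confK, Finset.card_eq_zero, Finset.filter_eq_empty_iff]
    intro z hz
    simp [h0 z hz]
  have hP : confPosPairs G T σ = 0 := by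
    rw [confPosPairs, Finset.card_eq_zero, Finset.filter_eq_empty_iff]
    intro q hq
    have : q.1 ∈ T := (Finset.mem_product.mp hq).1
    simp [h0 q.1 this]
  simp [confW, confGamma, hK, hP]

lemma confConn_sigma0 (G : SimpleGraph V) (S T : Finset V) (c σ : V → Bool)
    (h0 : ∀ z ∈ T, σ z = false) : confConn G S T c σ = 0 := by
  rw [confConn, Finset.card_eq_zero, Finset.filter_eq_empty_iff]
  intro q hq
  have : q.2 ∈ T := (Finset.mem_product.mp hq).2
  simp [h0 q.2 this]

lemma confK_sigma0 (T : Finset V) (σ : V → Bool) (h0 : ∀ z ∈ T, σ z = false) :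
    confK T σ = 0 := by
  rw [confK, Finset.card_eq_zero, Finset.filter_eq_empty_iff]
  intro z hz
  simp [h0 z hz]

lemma posPairs_sigma0 (G : SimpleGraph V) (T : Finset V) (σ : V → Bool)
    (h0 : ∀ z ∈ T, σ z = false) : confPosPairs G T σ = 0 := by
  rw [confPosPairs, Finset.card_eq_zero, Finset.filter_eq_empty_iff]
  intro q hq
  have : q.1 ∈ T := (Finset.mem_product.mp hq).1
  simp [h0 q.1 this]

lemma confW_union_sigma0 (G : SimpleGraph V) (Vdeg : ℕ) (a b : ℝ) (S : Finset V)
    (c σ : V → Bool) (h0 : ∀ z ∈ outerBoundary G S, σ z = false) :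
    confW G Vdeg a b (S ∪ outerBoundary G S) (confUnion S c σ) = confW G Vdeg a b S c := by
  set T := outerBoundary G S with hT
  have hST : ∀ z ∈ T, z ∉ S := fun z hz => mem_outerBoundary_not_mem hz
  rw [confW, confW, confGamma, confGamma]
  congr 1
  have h1 := confK_union_real S T hST c σ
  have h2 := posPairs_union_real G S T hST c σ
  rw [confK_sigma0 T σ h0] at h1
  rw [posPairs_sigma0 G T σ h0, confConn_sigma0 G S T c σ h0] at h2
  push_cast at h1 h2 ⊢
  rw [h1, h2]
  ring

lemma probGap_nonneg (G : SimpleGraph V) (Vdeg : ℕ) (a b : ℝ) (B : Finset V)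
    (c : V → Bool) : 0 ≤ probGap G Vdeg a b B c :=
  Real.iSup_nonneg fun σ' => div_nonneg (Real.exp_pos _).le (Real.exp_pos _).le

lemma final (G : SimpleGraph V) (Vdeg : ℕ) (hdeg : ∀ x : V, G.degree x = Vdeg)
    (a b : ℝ) (B : Finset V) (c σ : V → Bool) (A : Finset (V → Bool))
    (hAmem : ∀ τ, τ ∈ A ↔ (∀ y ∈ B, τ y = c y) ∧ ∀ z ∈ outerBoundary G B, τ z = σ z)
    (ind : ℝ) (hind0 : ind = 0 ∨ ind = 1)
    (hind1 : ¬ (∀ z ∈ outerBoundary G B, σ z = false) → ind = 1) :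
    gibbsProb G a b A / gibbsProb G a b (occursOn (outerBoundary G B) σ)
      ≤ confW G Vdeg a b B c
        * (1 + ind * probGap G Vdeg a b B c / confW G Vdeg a b (outerBoundary G B) σ) := by
  have hST : ∀ z ∈ outerBoundary G B, z ∉ B := fun z hz => mem_outerBoundary_not_mem hz
  have hWT : (0:ℝ) < confW G Vdeg a b (outerBoundary G B) σ := confW_pos G Vdeg a b _ σ
  have hWB : (0:ℝ) < confW G Vdeg a b B c := confW_pos G Vdeg a b B c
  set R := confW G Vdeg a b (B ∪ outerBoundary G B) (confUnion B c σ)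
    / confW G Vdeg a b (outerBoundary G B) σ with hR
  have hR0 : (0:ℝ) ≤ R := le_of_lt (div_pos (confW_pos G Vdeg a b _ _) hWT)
  set A0 := Finset.univ.filter (fun τ : V → Bool =>
    (∀ y ∈ B, τ y = false) ∧ ∀ z ∈ outerBoundary G B, τ z = σ z) with hA0
  have hsum : ∑ τ ∈ A, gibbsWeight G a b τ = R * ∑ τ ∈ A0, gibbsWeight G a b τ := by
    rw [Finset.mul_sum]
    refine Finset.sum_nbij' (fun τ => confUnion B (fun _ => false) τ)
      (fun τ => confUnion B c τ) ?_ ?_ ?_ ?_ ?_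
    · intro τ hτ
      rw [hAmem] at hτ
      rw [hA0, Finset.mem_filter]
      refine ⟨Finset.mem_univ _, fun y hy => by simp [confUnion, hy], fun z hz => ?_⟩
      simp only [confUnion, if_neg (hST z hz)]
      exact hτ.2 z hz
    · intro τ hτ
      rw [hA0, Finset.mem_filter] at hτ
      rw [hAmem]
      refine ⟨fun y hy => by simp [confUnion, hy], fun z hz => ?_⟩
      simp only [confUnion, if_neg (hST z hz)]
      exact hτ.2.2 z hz
    · intro τ hτ
      rw [hAmem] at hτ
      funext v
      by_cases hv : v ∈ B
      · simp [confUnion, hv, hτ.1 v hv]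
      · simp [confUnion, hv]
    · intro τ hτ
      rw [hA0, Finset.mem_filter] at hτ
      funext v
      by_cases hv : v ∈ B
      · simp [confUnion, hv, hτ.2.1 v hv]
      · simp [confUnion, hv]
    · intro τ hτ
      rw [hAmem] at hτ
      have h1 : ∀ y ∈ B, confUnion B (fun _ => false) τ y = false :=
        fun y hy => by simp [confUnion, hy]
      have h2 : ∀ z ∈ outerBoundary G B, confUnion B (fun _ => false) τ z = σ z :=
        fun z hz => by
          simp only [confUnion, if_neg (hST z hz)]
          exact hτ.2 z hz
      have hk := key_weight G Vdeg hdeg a b B c σ (confUnion B (fun _ => false) τ) h1 h2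
      have hback : confUnion B c (confUnion B (fun _ => false) τ) = τ := by
        funext v
        by_cases hv : v ∈ B
        · simp [confUnion, hv, hτ.1 v hv]
        · simp [confUnion, hv]
      rw [hback] at hk
      show gibbsWeight G a b τ = R * gibbsWeight G a b (confUnion B (fun _ => false) τ)
      rw [hR, div_mul_eq_mul_div, eq_div_iff hWT.ne']
      linear_combination hk
  have hZ : (0:ℝ) < ∑ τ : V → Bool, gibbsWeight G a b τ :=
    Finset.sum_pos (fun τ _ => gibbsWeight_pos G a b τ) Finset.univ_nonempty
  have hC0 : (0:ℝ) < ∑ τ ∈ occursOn (outerBoundary G B) σ, gibbsWeight G a b τ := by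
    apply Finset.sum_pos (fun τ _ => gibbsWeight_pos G a b τ)
    exact ⟨σ, mem_occursOn.mpr fun y _ => rfl⟩
  have hA0C : A0 ⊆ occursOn (outerBoundary G B) σ := by
    intro τ hτ
    rw [hA0, Finset.mem_filter] at hτ
    exact mem_occursOn.mpr hτ.2.2
  have hle1 : ∑ τ ∈ A0, gibbsWeight G a b τ
      ≤ ∑ τ ∈ occursOn (outerBoundary G B) σ, gibbsWeight G a b τ :=
    Finset.sum_le_sum_of_subset_of_nonneg hA0C
      (fun τ _ _ => (gibbsWeight_pos G a b τ).le)
  have hmain : gibbsProb G a b A / gibbsProb G a b (occursOn (outerBoundary G B) σ) ≤ R := by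
    rw [gibbsProb, gibbsProb, div_div_div_comm, div_self hZ.ne', div_one, hsum, mul_div_assoc]
    calc R * ((∑ τ ∈ A0, gibbsWeight G a b τ)
          / ∑ τ ∈ occursOn (outerBoundary G B) σ, gibbsWeight G a b τ)
        ≤ R * 1 := by
          apply mul_le_mul_of_nonneg_left _ hR0
          rw [div_le_one hC0]
          exact hle1
      _ = R := mul_one R
  refine le_trans hmain ?_
  have hgap0 : 0 ≤ probGap G Vdeg a b B c := probGap_nonneg G Vdeg a b B c
  by_cases h0 : ∀ z ∈ outerBoundary G B, σ z = false
  · have hReq : R = confW G Vdeg a b B c := by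
      rw [hR, confW_sigma0 G Vdeg a b (outerBoundary G B) σ h0, div_one,
        confW_union_sigma0 G Vdeg a b B c σ h0]
    rw [hReq]
    rcases hind0 with hi | hi
    · rw [hi, zero_mul, zero_div, add_zero, mul_one]
    · rw [hi]
      have hexp : confW G Vdeg a b B c * (1 + 1 * probGap G Vdeg a b B c
          / confW G Vdeg a b (outerBoundary G B) σ)
          = confW G Vdeg a b B c + confW G Vdeg a b B c
            * (probGap G Vdeg a b B c / confW G Vdeg a b (outerBoundary G B) σ) := by
        ring
      rw [hexp]
      linarith [mul_nonneg hWB.le (div_nonneg hgap0 hWT.le)]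
  · rw [hind1 h0]
    push_neg at h0
    obtain ⟨z, hzT, hz⟩ := h0
    have hztrue : σ z = true := by simpa using hz
    have hgap : confW G Vdeg a b (B ∪ outerBoundary G B) (confUnion B c σ)
        / confW G Vdeg a b B c ≤ probGap G Vdeg a b B c :=
      le_ciSup (Set.Finite.bddAbove (Set.finite_range
        (fun σ' : {σ' : V → Bool // ∃ z ∈ outerBoundary G B, σ' z = true} =>
          confW G Vdeg a b (B ∪ outerBoundary G B) (confUnion B c σ'.1)
            / confW G Vdeg a b B c))) ⟨σ, z, hzT, hztrue⟩
    have hRsplit : R = (confW G Vdeg a b (B ∪ outerBoundary G B) (confUnion B c σ)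
        / confW G Vdeg a b B c) * (confW G Vdeg a b B c
          / confW G Vdeg a b (outerBoundary G B) σ) := by
      rw [hR]
      field_simp
    have step : R ≤ probGap G Vdeg a b B c * (confW G Vdeg a b B c
        / confW G Vdeg a b (outerBoundary G B) σ) := by
      rw [hRsplit]
      exact mul_le_mul_of_nonneg_right hgap (le_of_lt (div_pos hWB hWT))
    have hfin : confW G Vdeg a b B c * (1 + 1 * probGap G Vdeg a b B c
        / confW G Vdeg a b (outerBoundary G B) σ)
        = confW G Vdeg a b B c + probGap G Vdeg a b B c * (confW G Vdeg a b B c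
          / confW G Vdeg a b (outerBoundary G B) σ) := by
      field_simp
    rw [hfin]
    linarith [step, hWB]

end CPUB

/-- Lemma 2.4, upper bound: `μ_{a,b}(I_x^η = 1 | σ) ≤ Wₙ(η)·(1 + 1_{σ≠σ⁰}·Δₙ(η)/Wₙ(σ))`,
where `σ⁰` is the all-negative boundary configuration. -/
theorem conditional_probability_upper_bound
    (d n ρ r : ℕ) [NeZero n] (p : ENNReal) (hp : 1 ≤ p) (hn : 2 * ρ * r < n)
    (Vdeg : ℕ) (hreg : ∀ x, (torusGraph d n ρ p).degree x = Vdeg)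
    (a b : ℝ) (ha : a < 0) (hb : 0 ≤ b) (x : Fin d → ZMod n)
    (η : (Fin d → ZMod n) → Bool) (σ : (Fin d → ZMod n) → Bool) :
    (fun (G : SimpleGraph (Fin d → ZMod n)) (B : Finset (Fin d → ZMod n)) =>
      (fun (δB : Finset (Fin d → ZMod n)) =>
        gibbsProb G a b (Finset.univ.filter fun τ : (Fin d → ZMod n) → Bool =>
            (∀ y ∈ B, τ y = torusTrans x η y) ∧ ∀ z ∈ δB, τ z = σ z)
          / gibbsProb G a b (occursOn δB σ)
        ≤ confW G Vdeg a b B (torusTrans x η)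
            * (1 + (if ∀ z ∈ δB, σ z = false then (0 : ℝ) else 1)
                * probGap G Vdeg a b B (torusTrans x η) / confW G Vdeg a b δB σ)
      ) (outerBoundary G B)
    ) (torusGraph d n ρ p) (torusBall d n ρ p x r) := by

  dsimp only
  refine CPUB.final (torusGraph d n ρ p) Vdeg hreg a b (torusBall d n ρ p x r)
    (torusTrans x η) σ _
    (fun τ => by
      rw [Finset.mem_filter]
      exact ⟨fun h => h.2, fun h => ⟨Finset.mem_univ _, h⟩⟩)
    _ ?_ ?_
  · by_cases h : ∀ z ∈ outerBoundary (torusGraph d n ρ p) (torusBall d n ρ p x r), σ z = false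
    · exact Or.inl (if_pos h)
    · exact Or.inr (if_neg h)
  · intro h
    exact if_neg h


end
end

section
/- If η' is a local configuration whose set of positive vertices contains that of η, then γ(η') ≥ γ(η) − (k(η') − k(η))·𝒱, and consequently Wₙ(η')/Wₙ(η) ≤ exp((2a + 2𝒱b)(k(η') − k(η))). -/
open Filter

attribute [local instance] Classical.propDecidable

noncomputable section

/-- If the positive vertices of `η'` contain those of `η`, then
`γ(η') ≥ γ(η) − (k(η') − k(η))·𝒱` and consequently
`Wₙ(η')/Wₙ(η) ≤ exp((2a + 2𝒱b)(k(η') − k(η)))`. -/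
theorem perimeter_weight_of_positive_superset {Vn : Type*} [Fintype Vn]
    (G : SimpleGraph Vn) (Vdeg : ℕ) (hreg : ∀ x, G.degree x = Vdeg)
    (a b : ℝ) (ha : a < 0) (hb : 0 ≤ b)
    (B : Finset Vn) (η η' : Vn → Bool)
    (hsub : ∀ y ∈ B, η y = true → η' y = true) :
    confGamma G Vdeg B η - ((confK B η' : ℤ) - confK B η) * Vdeg ≤ confGamma G Vdeg B η'
    ∧ confW G Vdeg a b B η' / confW G Vdeg a b B η
        ≤ Real.exp ((2 * a + 2 * Vdeg * b) * ((confK B η' : ℝ) - confK B η)) := by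
    classical
  set N : Finset Vn := B.filter (fun x => η' x = true ∧ η x = false) with hNdef
  -- k' = k + |N|
  have hfil : B.filter (fun x => η' x = true)
      = B.filter (fun x => η x = true) ∪ N := by
    ext x
    simp only [Finset.mem_union, Finset.mem_filter, hNdef]
    constructor
    · rintro ⟨hx, hx'⟩
      by_cases h : η x = true
      · exact Or.inl ⟨hx, h⟩
      · simp only [Bool.not_eq_true] at h
        exact Or.inr ⟨hx, hx', h⟩
    · rintro (⟨hx, hx'⟩ | ⟨hx, hx', _⟩)
      · exact ⟨hx, hsub x hx hx'⟩
      · exact ⟨hx, hx'⟩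
  have hdisj : Disjoint (B.filter (fun x => η x = true)) N := by
    rw [Finset.disjoint_left]
    intro x hx hxN
    simp only [Finset.mem_filter, hNdef] at hx hxN
    simp [hx.2] at hxN
  have hk : confK B η' = confK B η + N.card := by
    rw [confK, confK, hfil, Finset.card_union_of_disjoint hdisj]
  -- degree of each vertex
  have hdeg : ∀ x : Vn, (G.neighborFinset x).card = Vdeg := by
    intro x; rw [← hreg x]; rfl
  -- bound on the positive pairs of η'
  have hpairs : confPosPairs G B η' ≤ confPosPairs G B η + 2 * Vdeg * N.card := by
    have hsubset : ((B ×ˢ B).filter fun q => G.Adj q.1 q.2 ∧ η' q.1 = true ∧ η' q.2 = true)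
        ⊆ (((B ×ˢ B).filter fun q => G.Adj q.1 q.2 ∧ η q.1 = true ∧ η q.2 = true)
          ∪ N.biUnion (fun x => {x} ×ˢ G.neighborFinset x))
          ∪ N.biUnion (fun x => G.neighborFinset x ×ˢ {x}) := by
      intro q hq
      simp only [Finset.mem_filter, Finset.mem_product] at hq
      obtain ⟨⟨hq1, hq2⟩, hadj, h1, h2⟩ := hq
      simp only [Finset.mem_union, Finset.mem_filter, Finset.mem_product,
        Finset.mem_biUnion, Finset.mem_singleton, SimpleGraph.mem_neighborFinset, hNdef]
      by_cases hb1 : η q.1 = true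
      · by_cases hb2 : η q.2 = true
        · exact Or.inl (Or.inl ⟨⟨hq1, hq2⟩, hadj, hb1, hb2⟩)
        · simp only [Bool.not_eq_true] at hb2
          exact Or.inr ⟨q.2, ⟨hq2, h2, hb2⟩, hadj.symm, rfl⟩
      · simp only [Bool.not_eq_true] at hb1
        exact Or.inl (Or.inr ⟨q.1, ⟨hq1, h1, hb1⟩, rfl, hadj⟩)
    calc confPosPairs G B η'
        ≤ _ := Finset.card_le_card hsubset
      _ ≤ (((B ×ˢ B).filter fun q => G.Adj q.1 q.2 ∧ η q.1 = true ∧ η q.2 = true)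
            ∪ N.biUnion (fun x => {x} ×ˢ G.neighborFinset x)).card
          + (N.biUnion (fun x => G.neighborFinset x ×ˢ {x})).card :=
        Finset.card_union_le _ _
      _ ≤ (((B ×ˢ B).filter fun q => G.Adj q.1 q.2 ∧ η q.1 = true ∧ η q.2 = true).card
          + (N.biUnion (fun x => {x} ×ˢ G.neighborFinset x)).card)
          + (N.biUnion (fun x => G.neighborFinset x ×ˢ {x})).card := by
        gcongr; exact Finset.card_union_le _ _
      _ ≤ confPosPairs G B η + Vdeg * N.card + Vdeg * N.card := by
        have hb1 : (N.biUnion (fun x => {x} ×ˢ G.neighborFinset x)).card ≤ Vdeg * N.card := by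
          calc _ ≤ ∑ x ∈ N, ({x} ×ˢ G.neighborFinset x).card := Finset.card_biUnion_le
            _ = ∑ x ∈ N, Vdeg := by
                apply Finset.sum_congr rfl; intro x _
                rw [Finset.card_product, Finset.card_singleton, one_mul, hdeg]
            _ = Vdeg * N.card := by rw [Finset.sum_const, smul_eq_mul, mul_comm]
        have hb2 : (N.biUnion (fun x => G.neighborFinset x ×ˢ {x})).card ≤ Vdeg * N.card := by
          calc _ ≤ ∑ x ∈ N, (G.neighborFinset x ×ˢ {x}).card := Finset.card_biUnion_le
            _ = ∑ x ∈ N, Vdeg := by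
                apply Finset.sum_congr rfl; intro x _
                rw [Finset.card_product, Finset.card_singleton, mul_one, hdeg]
            _ = Vdeg * N.card := by rw [Finset.sum_const, smul_eq_mul, mul_comm]
        gcongr
        exact le_refl _
      _ = confPosPairs G B η + 2 * Vdeg * N.card := by ring
  -- first part
  have hkZ : (confK B η' : ℤ) - confK B η = (N.card : ℤ) := by
    rw [hk]; push_cast; ring
  have part1 : confGamma G Vdeg B η - ((confK B η' : ℤ) - confK B η) * Vdeg
      ≤ confGamma G Vdeg B η' := by
    rw [hkZ, confGamma, confGamma, hk]
    have : (confPosPairs G B η' : ℤ) ≤ confPosPairs G B η + 2 * Vdeg * N.card := by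
      exact_mod_cast hpairs
    push_cast
    linarith
  refine ⟨part1, ?_⟩
  -- second part
  rw [confW, confW, ← Real.exp_sub, Real.exp_le_exp]
  have hg : ((confGamma G Vdeg B η : ℝ)) - ((confK B η' : ℝ) - confK B η) * Vdeg
      ≤ confGamma G Vdeg B η' := by exact_mod_cast part1
  nlinarith [hg, hb]

end
end

section
/- If a(n) + 2𝒱·b(n) ≤ 0 for n large, then for every V ⊆ Vn and every configuration ζ on V, μ_{a,b}(I_V^ζ = 1) ≤ 2^{|δV|}·Wₙ(ζ); i.e. hypothesis (H2) holds with constant C = 2^{|δV|}. -/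
open Filter

attribute [local instance] Classical.propDecidable

noncomputable section

section H2Aux

variable {Vt : Type*} [Fintype Vt]

private lemma H2deg_sum (G : SimpleGraph Vt) (Vdeg : ℕ)
    (hreg : ∀ x, G.degree x = Vdeg) (x : Vt) :
    ∑ y : Vt, (if G.Adj x y then (1:ℝ) else 0) = (Vdeg : ℝ) := by
  rw [Finset.sum_boole]
  have h : Finset.univ.filter (fun y => G.Adj x y) = G.neighborFinset x := by
    ext y; simp [SimpleGraph.mem_neighborFinset]
  rw [h, show (G.neighborFinset x).card = G.degree x from rfl, hreg x]

private lemma H2count_fst (G : SimpleGraph Vt) (Vdeg : ℕ)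
    (hreg : ∀ x, G.degree x = Vdeg) (R : Finset Vt) :
    ∑ q ∈ Finset.univ.filter (fun q : Vt × Vt => G.Adj q.1 q.2),
      (if q.1 ∈ R then (1:ℝ) else 0) = (Vdeg : ℝ) * R.card := by
  rw [Finset.sum_filter, Fintype.sum_prod_type]
  have key : ∀ x : Vt, (∑ y : Vt, if G.Adj x y then (if x ∈ R then (1:ℝ) else 0) else 0)
      = if x ∈ R then (Vdeg : ℝ) else 0 := by
    intro x
    by_cases hx : x ∈ R
    · simp only [hx, if_true]
      exact H2deg_sum G Vdeg hreg x
    · simp [hx]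
  rw [Finset.sum_congr rfl fun x _ => key x, Finset.sum_ite_mem, Finset.univ_inter,
    Finset.sum_const, nsmul_eq_mul, mul_comm]

private lemma H2stepA (G : SimpleGraph Vt) (Vdeg : ℕ)
    (hreg : ∀ x, G.degree x = Vdeg) (a b : ℝ) (hb : 0 ≤ b)
    (hab : a + (Vdeg : ℝ) * b ≤ 0) (S : Finset Vt) (ζ σ : Vt → Bool)
    (hσ : ∀ y ∈ S, σ y = ζ y) :
    gibbsWeight G a b σ ≤ confW G Vdeg a b S ζ *
      gibbsWeight G a b (fun x => if x ∈ S ∪ outerBoundary G S then false else σ x) := by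
  simp only [gibbsWeight, confW, ← Real.exp_add]
  rw [Real.exp_le_exp]
  set δB := outerBoundary G S with hδB
  set E := Finset.univ.filter (fun q : Vt × Vt => G.Adj q.1 q.2) with hE
  set Q := (S ∪ δB).filter (fun x => σ x = true) with hQdef
  set P := S.filter (fun x => σ x = true) with hPdef
  set T := δB.filter (fun x => σ x = true) with hTdef
  have hdisj : Disjoint S δB := by
    rw [Finset.disjoint_left]
    intro x hx hxδ
    rw [hδB] at hxδ
    simp only [outerBoundary, Finset.mem_filter] at hxδ
    exact hxδ.2.1 hx
  have hQunion : Q = P ∪ T := by rw [hQdef, hPdef, hTdef, Finset.filter_union]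
  have hPT : Disjoint P T :=
    hdisj.mono (Finset.filter_subset _ _) (Finset.filter_subset _ _)
  have hsQ : ∀ x ∈ Q, (if σ x then (1:ℝ) else -1) = 1 := by
    intro x hx; rw [(Finset.mem_filter.mp hx).2]; simp
  have hs0 : ∀ x, (if (if x ∈ S ∪ δB then false else σ x) then (1:ℝ) else -1)
      = if x ∈ Q then -1 else (if σ x then (1:ℝ) else -1) := by
    intro x
    by_cases hU : x ∈ S ∪ δB
    · by_cases hσx : σ x = true
      · have hxQ : x ∈ Q := by rw [hQdef]; exact Finset.mem_filter.mpr ⟨hU, hσx⟩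
        simp [hU, hxQ]
      · have hxQ : x ∉ Q := fun h => hσx (Finset.mem_filter.mp h).2
        simp [hU, hxQ, hσx]
    · have hxQ : x ∉ Q := fun h => hU (Finset.mem_filter.mp h).1
      simp [hU, hxQ]
  -- Sum over vertices
  have h1 : ∑ x : Vt, (if (if x ∈ S ∪ δB then false else σ x) then (1:ℝ) else -1)
      = (∑ x : Vt, (if σ x then (1:ℝ) else -1)) - 2 * Q.card := by
    have key : ∀ x : Vt, (if (if x ∈ S ∪ δB then false else σ x) then (1:ℝ) else -1)
        = (if σ x then (1:ℝ) else -1) - (if x ∈ Q then (2:ℝ) else 0) := by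
      intro x; rw [hs0 x]
      by_cases h : x ∈ Q
      · simp [h, hsQ x h]; norm_num
      · simp [h]
    rw [Finset.sum_congr rfl fun x _ => key x, Finset.sum_sub_distrib]
    congr 1
    rw [Finset.sum_ite_mem, Finset.univ_inter, Finset.sum_const, nsmul_eq_mul, mul_comm]
  -- Sum over pairs
  have hswap : ∑ q ∈ E, (if q.2 ∈ Q ∧ q.1 ∉ Q then (if σ q.1 then (1:ℝ) else -1) else 0)
      = ∑ q ∈ E, (if q.1 ∈ Q ∧ q.2 ∉ Q then (if σ q.2 then (1:ℝ) else -1) else 0) := by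
    rw [hE]
    refine Finset.sum_equiv (Equiv.prodComm Vt Vt) (fun q => ?_) (fun q hq => ?_)
    · simp [G.adj_comm]
    · rfl
  have h2 : ∑ q ∈ E, ((if (if q.1 ∈ S ∪ δB then false else σ q.1) then (1:ℝ) else -1)
        * (if (if q.2 ∈ S ∪ δB then false else σ q.2) then (1:ℝ) else -1))
      = (∑ q ∈ E, (if σ q.1 then (1:ℝ) else -1) * (if σ q.2 then (1:ℝ) else -1))
        - 4 * ∑ q ∈ E, (if q.1 ∈ Q ∧ q.2 ∉ Q then (if σ q.2 then (1:ℝ) else -1) else 0) := by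
    have key : ∀ q : Vt × Vt,
        ((if (if q.1 ∈ S ∪ δB then false else σ q.1) then (1:ℝ) else -1)
          * (if (if q.2 ∈ S ∪ δB then false else σ q.2) then (1:ℝ) else -1))
        = ((if σ q.1 then (1:ℝ) else -1) * (if σ q.2 then (1:ℝ) else -1)
          - 2 * (if q.1 ∈ Q ∧ q.2 ∉ Q then (if σ q.2 then (1:ℝ) else -1) else 0))
          - 2 * (if q.2 ∈ Q ∧ q.1 ∉ Q then (if σ q.1 then (1:ℝ) else -1) else 0) := by
      intro q
      rw [hs0 q.1, hs0 q.2]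
      by_cases hq1 : q.1 ∈ Q <;> by_cases hq2 : q.2 ∈ Q
      · simp [hq1, hq2, hsQ q.1 hq1, hsQ q.2 hq2]
      · simp only [hq1, hq2, if_true, if_false, not_false_iff, not_true, true_and, false_and,
          and_true, and_false, hsQ q.1 hq1]
        ring
      · simp only [hq1, hq2, if_true, if_false, not_false_iff, not_true, true_and, false_and,
          and_true, and_false, hsQ q.2 hq2]
        ring
      · simp [hq1, hq2]
    rw [Finset.sum_congr rfl fun q _ => key q, Finset.sum_sub_distrib, Finset.sum_sub_distrib,
      ← Finset.mul_sum, ← Finset.mul_sum, hswap]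
    ring
  -- counting identities
  have countP : ∑ q ∈ E, (if q.1 ∈ P then (1:ℝ) else 0) = (Vdeg:ℝ) * P.card := by
    rw [hE]; exact H2count_fst G Vdeg hreg P
  have countT : ∑ q ∈ E, (if q.1 ∈ T then (1:ℝ) else 0) = (Vdeg:ℝ) * T.card := by
    rw [hE]; exact H2count_fst G Vdeg hreg T
  have hsplit : ∀ R : Finset Vt, ∑ q ∈ E, (if q.1 ∈ R ∧ q.2 ∉ Q then (1:ℝ) else 0)
      = (∑ q ∈ E, (if q.1 ∈ R then (1:ℝ) else 0))
        - (∑ q ∈ E, (if q.1 ∈ R ∧ q.2 ∈ Q then (1:ℝ) else 0)) := by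
    intro R
    rw [← Finset.sum_sub_distrib]
    refine Finset.sum_congr rfl fun q _ => ?_
    by_cases hq1 : q.1 ∈ R <;> by_cases hq2 : q.2 ∈ Q <;> simp [hq1, hq2]
  have hQsplit : ∀ R : Finset Vt, ∑ q ∈ E, (if q.1 ∈ R ∧ q.2 ∈ Q then (1:ℝ) else 0)
      = (∑ q ∈ E, (if q.1 ∈ R ∧ q.2 ∈ P then (1:ℝ) else 0))
        + (∑ q ∈ E, (if q.1 ∈ R ∧ q.2 ∈ T then (1:ℝ) else 0)) := by
    intro R
    rw [← Finset.sum_add_distrib]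
    refine Finset.sum_congr rfl fun q _ => ?_
    have hmem : q.2 ∈ Q ↔ q.2 ∈ P ∨ q.2 ∈ T := by rw [hQunion]; exact Finset.mem_union
    by_cases hq1 : q.1 ∈ R
    · by_cases hq2 : q.2 ∈ P
      · have hq3 : q.2 ∉ T := fun h => (Finset.disjoint_left.mp hPT hq2) h
        simp [hq1, hq2, hq3, hmem]
      · by_cases hq3 : q.2 ∈ T <;> simp [hq1, hq2, hq3, hmem]
    · simp [hq1]
  have hsymPT : ∑ q ∈ E, (if q.1 ∈ T ∧ q.2 ∈ P then (1:ℝ) else 0)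
      = ∑ q ∈ E, (if q.1 ∈ P ∧ q.2 ∈ T then (1:ℝ) else 0) := by
    rw [hE]
    refine Finset.sum_equiv (Equiv.prodComm Vt Vt) (fun q => ?_) (fun q hq => ?_)
    · simp [G.adj_comm]
    · by_cases hq1 : q.1 ∈ T <;> by_cases hq2 : q.2 ∈ P <;>
        simp [hq1, hq2, Equiv.prodComm]
  -- the boundary-edge sum
  have hneg : ∀ q ∈ E, q.1 ∈ P → q.2 ∉ Q → σ q.2 = false := by
    intro q hq h1 h2
    have hadj : G.Adj q.1 q.2 := by
      rw [hE] at hq; exact (Finset.mem_filter.mp hq).2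
    have hU : q.2 ∈ S ∪ δB := by
      by_cases hS : q.2 ∈ S
      · exact Finset.mem_union_left _ hS
      · refine Finset.mem_union_right _ ?_
        rw [hδB]
        simp only [outerBoundary, Finset.mem_filter, Finset.mem_univ, true_and]
        exact ⟨hS, q.1, (Finset.mem_filter.mp h1).1, hadj⟩
    by_contra h
    exact h2 (Finset.mem_filter.mpr ⟨hU, by simpa using h⟩)
  have hgsplit : ∑ q ∈ E, (if q.1 ∈ Q ∧ q.2 ∉ Q then (if σ q.2 then (1:ℝ) else -1) else 0)
      = (∑ q ∈ E, (if q.1 ∈ P ∧ q.2 ∉ Q then (if σ q.2 then (1:ℝ) else -1) else 0))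
        + (∑ q ∈ E, (if q.1 ∈ T ∧ q.2 ∉ Q then (if σ q.2 then (1:ℝ) else -1) else 0)) := by
    rw [← Finset.sum_add_distrib]
    refine Finset.sum_congr rfl fun q _ => ?_
    have hmem : q.1 ∈ Q ↔ q.1 ∈ P ∨ q.1 ∈ T := by rw [hQunion]; exact Finset.mem_union
    by_cases hq2 : q.2 ∈ Q
    · simp [hq2]
    · by_cases hq1 : q.1 ∈ P
      · have hq3 : q.1 ∉ T := fun h => (Finset.disjoint_left.mp hPT hq1) h
        simp [hq1, hq2, hq3, hmem]
      · by_cases hq3 : q.1 ∈ T <;> simp [hq1, hq2, hq3, hmem]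
  have hgP : ∑ q ∈ E, (if q.1 ∈ P ∧ q.2 ∉ Q then (if σ q.2 then (1:ℝ) else -1) else 0)
      = - ∑ q ∈ E, (if q.1 ∈ P ∧ q.2 ∉ Q then (1:ℝ) else 0) := by
    rw [← Finset.sum_neg_distrib]
    refine Finset.sum_congr rfl fun q hq => ?_
    by_cases h : q.1 ∈ P ∧ q.2 ∉ Q
    · simp only [h, if_true]
      rw [hneg q hq h.1 h.2]
      norm_num
    · simp [h]
  have hgT : ∑ q ∈ E, (if q.1 ∈ T ∧ q.2 ∉ Q then (if σ q.2 then (1:ℝ) else -1) else 0)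
      ≤ ∑ q ∈ E, (if q.1 ∈ T ∧ q.2 ∉ Q then (1:ℝ) else 0) := by
    refine Finset.sum_le_sum fun q _ => ?_
    by_cases h : q.1 ∈ T ∧ q.2 ∉ Q
    · simp only [h, if_true]
      by_cases hσ2 : σ q.2 = true <;> simp [hσ2]
    · simp [h]
  -- identification with confK / confPosPairs
  have hkP : ((confK S ζ : ℕ) : ℝ) = P.card := by
    rw [confK, hPdef]
    norm_cast
    apply congrArg
    exact Finset.filter_congr fun x hx => by rw [hσ x hx]
  have heP : ((confPosPairs G S ζ : ℕ) : ℝ)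
      = ∑ q ∈ E, (if q.1 ∈ P ∧ q.2 ∈ P then (1:ℝ) else 0) := by
    rw [Finset.sum_boole]
    have hset : E.filter (fun q => q.1 ∈ P ∧ q.2 ∈ P)
        = (S ×ˢ S).filter (fun q => G.Adj q.1 q.2 ∧ ζ q.1 = true ∧ ζ q.2 = true) := by
      ext q
      rw [hE, hPdef]
      simp only [Finset.mem_filter, Finset.mem_univ, true_and, Finset.mem_product]
      constructor
      · rintro ⟨hadj, ⟨h1S, h1⟩, ⟨h2S, h2⟩⟩
        exact ⟨⟨h1S, h2S⟩, hadj, by rw [← hσ q.1 h1S]; exact h1, by rw [← hσ q.2 h2S]; exact h2⟩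
      · rintro ⟨⟨h1S, h2S⟩, hadj, hc1, hc2⟩
        exact ⟨hadj, ⟨h1S, by rw [hσ q.1 h1S]; exact hc1⟩, ⟨h2S, by rw [hσ q.2 h2S]; exact hc2⟩⟩
    rw [confPosPairs, hset]
  have heT : (0:ℝ) ≤ ∑ q ∈ E, (if q.1 ∈ T ∧ q.2 ∈ T then (1:ℝ) else 0) :=
    Finset.sum_nonneg fun q _ => by split <;> norm_num
  have hγ : ((confGamma G Vdeg S ζ : ℤ) : ℝ)
      = (Vdeg:ℝ) * P.card - ∑ q ∈ E, (if q.1 ∈ P ∧ q.2 ∈ P then (1:ℝ) else 0) := by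
    rw [confGamma]
    push_cast
    rw [hkP, heP]
  have hQcard : ((Q.card : ℕ) : ℝ) = (P.card : ℝ) + T.card := by
    rw [hQunion, Finset.card_union_of_disjoint hPT]
    push_cast
    ring
  -- assemble the bound on the boundary-edge sum
  have hgbound : ∑ q ∈ E, (if q.1 ∈ Q ∧ q.2 ∉ Q then (if σ q.2 then (1:ℝ) else -1) else 0)
      ≤ -((Vdeg:ℝ) * P.card - (∑ q ∈ E, (if q.1 ∈ P ∧ q.2 ∈ P then (1:ℝ) else 0))
          - (∑ q ∈ E, (if q.1 ∈ P ∧ q.2 ∈ T then (1:ℝ) else 0)))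
        + ((Vdeg:ℝ) * T.card - (∑ q ∈ E, (if q.1 ∈ P ∧ q.2 ∈ T then (1:ℝ) else 0))
          - (∑ q ∈ E, (if q.1 ∈ T ∧ q.2 ∈ T then (1:ℝ) else 0))) := by
    have e1 : ∑ q ∈ E, (if q.1 ∈ P ∧ q.2 ∉ Q then (1:ℝ) else 0)
        = (Vdeg:ℝ) * P.card - (∑ q ∈ E, (if q.1 ∈ P ∧ q.2 ∈ P then (1:ℝ) else 0))
          - (∑ q ∈ E, (if q.1 ∈ P ∧ q.2 ∈ T then (1:ℝ) else 0)) := by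
      rw [hsplit P, countP, hQsplit P]; ring
    have e2 : ∑ q ∈ E, (if q.1 ∈ T ∧ q.2 ∉ Q then (1:ℝ) else 0)
        = (Vdeg:ℝ) * T.card - (∑ q ∈ E, (if q.1 ∈ P ∧ q.2 ∈ T then (1:ℝ) else 0))
          - (∑ q ∈ E, (if q.1 ∈ T ∧ q.2 ∈ T then (1:ℝ) else 0)) := by
      rw [hsplit T, countT, hQsplit T, hsymPT]; ring
    rw [hgsplit, hgP, e1]
    linarith [hgT, e2.le, e2.ge]
  -- final bookkeeping
  rw [h1, h2, hγ, hkP, hQcard]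
  have f1 : b * (∑ q ∈ E, (if q.1 ∈ Q ∧ q.2 ∉ Q then (if σ q.2 then (1:ℝ) else -1) else 0))
      ≤ b * (-((Vdeg:ℝ) * P.card - (∑ q ∈ E, (if q.1 ∈ P ∧ q.2 ∈ P then (1:ℝ) else 0))
          - (∑ q ∈ E, (if q.1 ∈ P ∧ q.2 ∈ T then (1:ℝ) else 0)))
        + ((Vdeg:ℝ) * T.card - (∑ q ∈ E, (if q.1 ∈ P ∧ q.2 ∈ T then (1:ℝ) else 0))
          - (∑ q ∈ E, (if q.1 ∈ T ∧ q.2 ∈ T then (1:ℝ) else 0)))) :=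
    mul_le_mul_of_nonneg_left hgbound hb
  have f2 : (T.card : ℝ) * (a + (Vdeg:ℝ) * b) ≤ 0 :=
    mul_nonpos_of_nonneg_of_nonpos (Nat.cast_nonneg _) hab
  have f3 : 0 ≤ b * ∑ q ∈ E, (if q.1 ∈ T ∧ q.2 ∈ T then (1:ℝ) else 0) :=
    mul_nonneg hb heT
  nlinarith [f1, f2, f3]

private lemma H2key (G : SimpleGraph Vt) (Vdeg : ℕ)
    (hreg : ∀ x, G.degree x = Vdeg) (a b : ℝ) (hb : 0 ≤ b)
    (hab : a + (Vdeg : ℝ) * b ≤ 0) (S : Finset Vt) (ζ : Vt → Bool) :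
    gibbsProb G a b (occursOn S ζ)
      ≤ (2:ℝ) ^ (outerBoundary G S).card * confW G Vdeg a b S ζ := by
  have hwpos : ∀ τ : Vt → Bool, 0 < gibbsWeight G a b τ := fun τ => Real.exp_pos _
  have hZ : 0 < ∑ τ : Vt → Bool, gibbsWeight G a b τ :=
    Finset.sum_pos (fun τ _ => hwpos τ) ⟨fun _ => true, Finset.mem_univ _⟩
  rw [gibbsProb, div_le_iff₀ hZ]
  set φ : (Vt → Bool) → (Vt → Bool) :=
    fun σ x => if x ∈ S ∪ outerBoundary G S then false else σ x with hφ
  have hA : ∀ σ ∈ occursOn S ζ, ∀ y ∈ S, σ y = ζ y := by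
    intro σ hσ
    simpa [occursOn] using hσ
  have hfiber : ∀ τ : Vt → Bool, ((occursOn S ζ).filter fun σ => φ σ = τ).card
      ≤ 2 ^ (outerBoundary G S).card := by
    intro τ
    have hcard : ((occursOn S ζ).filter fun σ => φ σ = τ).card
        ≤ (Finset.univ : Finset ((↥(outerBoundary G S)) → Bool)).card := by
      apply Finset.card_le_card_of_injOn (fun σ (z : ↥(outerBoundary G S)) => σ z.1)
        (fun _ _ => Finset.mem_univ _)
      intro σ1 h1 σ2 h2 h12
      have h1' := Finset.mem_filter.mp (Finset.mem_coe.mp h1)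
      have h2' := Finset.mem_filter.mp (Finset.mem_coe.mp h2)
      funext x
      by_cases hxS : x ∈ S
      · rw [hA σ1 h1'.1 x hxS, hA σ2 h2'.1 x hxS]
      · by_cases hxδ : x ∈ outerBoundary G S
        · exact congrFun h12 ⟨x, hxδ⟩
        · have hxU : x ∉ S ∪ outerBoundary G S := by simp [hxS, hxδ]
          have e1 : σ1 x = τ x := by
            rw [← h1'.2]; simp only [hφ]; rw [if_neg hxU]
          have e2 : σ2 x = τ x := by
            rw [← h2'.2]; simp only [hφ]; rw [if_neg hxU]
          rw [e1, e2]
    calc ((occursOn S ζ).filter fun σ => φ σ = τ).card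
        ≤ (Finset.univ : Finset ((↥(outerBoundary G S)) → Bool)).card := hcard
      _ = 2 ^ (outerBoundary G S).card := by
          simp [Finset.card_univ]
  have hB : ∑ σ ∈ occursOn S ζ, gibbsWeight G a b (φ σ)
      ≤ (2:ℝ) ^ (outerBoundary G S).card * ∑ τ : Vt → Bool, gibbsWeight G a b τ := by
    rw [← Finset.sum_fiberwise_of_maps_to (g := φ) (t := (Finset.univ : Finset (Vt → Bool)))
      (fun σ _ => Finset.mem_univ _) (fun σ => gibbsWeight G a b (φ σ))]
    have hstep : ∀ τ ∈ (Finset.univ : Finset (Vt → Bool)),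
        ∑ σ ∈ (occursOn S ζ).filter (fun σ => φ σ = τ), gibbsWeight G a b (φ σ)
        ≤ (2:ℝ) ^ (outerBoundary G S).card * gibbsWeight G a b τ := by
      intro τ _
      have hconst : ∑ σ ∈ (occursOn S ζ).filter (fun σ => φ σ = τ), gibbsWeight G a b (φ σ)
          = ((occursOn S ζ).filter (fun σ => φ σ = τ)).card • gibbsWeight G a b τ := by
        rw [Finset.sum_congr rfl fun σ hσ => by rw [(Finset.mem_filter.mp hσ).2],
          Finset.sum_const]
      rw [hconst, nsmul_eq_mul]
      apply mul_le_mul_of_nonneg_right _ (hwpos τ).le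
      calc (((occursOn S ζ).filter (fun σ => φ σ = τ)).card : ℝ)
          ≤ ((2 ^ (outerBoundary G S).card : ℕ) : ℝ) := by exact_mod_cast hfiber τ
        _ = (2:ℝ) ^ (outerBoundary G S).card := by push_cast; ring
    calc ∑ τ ∈ (Finset.univ : Finset (Vt → Bool)),
          ∑ σ ∈ (occursOn S ζ).filter (fun σ => φ σ = τ), gibbsWeight G a b (φ σ)
        ≤ ∑ τ : Vt → Bool, (2:ℝ) ^ (outerBoundary G S).card * gibbsWeight G a b τ :=
          Finset.sum_le_sum hstep
      _ = (2:ℝ) ^ (outerBoundary G S).card * ∑ τ : Vt → Bool, gibbsWeight G a b τ := by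
          rw [Finset.mul_sum]
  have hW0 : 0 ≤ confW G Vdeg a b S ζ := (Real.exp_pos _).le
  calc ∑ σ ∈ occursOn S ζ, gibbsWeight G a b σ
      ≤ ∑ σ ∈ occursOn S ζ, confW G Vdeg a b S ζ * gibbsWeight G a b (φ σ) :=
        Finset.sum_le_sum fun σ hσ => H2stepA G Vdeg hreg a b hb hab S ζ σ (hA σ hσ)
    _ = confW G Vdeg a b S ζ * ∑ σ ∈ occursOn S ζ, gibbsWeight G a b (φ σ) := by
        rw [Finset.mul_sum]
    _ ≤ confW G Vdeg a b S ζ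
        * ((2:ℝ) ^ (outerBoundary G S).card * ∑ τ : Vt → Bool, gibbsWeight G a b τ) :=
        mul_le_mul_of_nonneg_left hB hW0
    _ = (2:ℝ) ^ (outerBoundary G S).card * confW G Vdeg a b S ζ
        * ∑ τ : Vt → Bool, gibbsWeight G a b τ := by ring

end H2Aux

/-- Proposition 3.2, second half: if `a(n) + 2𝒱·b(n) ≤ 0` for `n` large enough, then for every
`V ⊆ Vn` and every configuration `ζ` on `V`, `μ_{a,b}(I_V^ζ = 1) ≤ 2^{|δV|}·Wₙ(ζ)`;
i.e. hypothesis (H2) holds with constant `C = 2^{|δV|}`. -/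
theorem H2_of_field_pair_potential
    (d ρ : ℕ) (p : ENNReal) (hp : 1 ≤ p) (Vdeg : ℕ)
    (a b : ℕ → ℝ) (ha : ∀ n, a n < 0) (hb : ∀ n, 0 ≤ b n)
    (hreg : ∀ (n : ℕ) [NeZero n], 2 * ρ < n → ∀ x, (torusGraph d n ρ p).degree x = Vdeg)
    (hab : ∃ N₀ : ℕ, ∀ n ≥ N₀, a n + 2 * (Vdeg : ℝ) * b n ≤ 0) :
    ∃ N : ℕ, ∀ (n : ℕ) [NeZero n], N ≤ n →
      ∀ (V : Finset (Fin d → ZMod n)) (ζ : (Fin d → ZMod n) → Bool),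
        gibbsProb (torusGraph d n ρ p) (a n) (b n) (occursOn V ζ)
          ≤ (2 : ℝ) ^ (outerBoundary (torusGraph d n ρ p) V).card
            * confW (torusGraph d n ρ p) Vdeg (a n) (b n) V ζ := by
  obtain ⟨N₀, hN₀⟩ := hab
  refine ⟨max N₀ (2 * ρ + 1), ?_⟩
  intro n _ hn V ζ
  have h1 : N₀ ≤ n := le_trans (le_max_left _ _) hn
  have h2 : 2 * ρ < n := lt_of_lt_of_le (Nat.lt_succ_self _) (le_trans (le_max_right _ _) hn)
  have hab' : a n + (Vdeg : ℝ) * b n ≤ 0 := by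
    have hx := hN₀ n h1
    have hnn : 0 ≤ (Vdeg : ℝ) * b n := mul_nonneg (Nat.cast_nonneg _) (hb n)
    linarith
  exact H2key (torusGraph d n ρ p) Vdeg (hreg n h2) (a n) (b n) (hb n) hab' V ζ

end
end
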